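/- Let k be a totally real number field of degree d over ℚ and let ℓ be a totally complex quadratic extension of k. Then the kernel of the surjective homomorphism 𝒪_ℓ^× / (𝒪_ℓ^×)^3 → 𝒪_k^× / (𝒪_k^×)^3 induced by the norm map N_{ℓ/k} has cardinality equal to the number of cube roots of unity in ℓ (i.e., #{x ∈ ℓ : x^3 = 1}). -/

import Mathlib

open NumberField

/-- The subgroup of cubes of a commutative group. -/
def cubeSubgroup (G : Type) [CommGroup G] : Subgroup G :=
  (powMonoidHom 3 : G →* G).range

lemma cubeSubgroup_le_comap {G H : Type} [CommGroup G] [CommGroup H] (f : G →* H) :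
    cubeSubgroup G ≤ (cubeSubgroup H).comap f := by
  rintro x ⟨y, rfl⟩
  exact ⟨f y, by show (f y) ^ 3 = f (y ^ 3); rw [map_pow]⟩

/-- The homomorphism `𝒪_ℓ^×/(𝒪_ℓ^×)³ → 𝒪_k^×/(𝒪_k^×)³` induced by the norm map
`N_{ℓ/k}`. -/
noncomputable def normUnitsModCubes (k ℓ : Type) [Field k] [NumberField k]
    [Field ℓ] [NumberField ℓ] [Algebra k ℓ] [FiniteDimensional k ℓ] :
    ((𝓞 ℓ)ˣ ⧸ cubeSubgroup (𝓞 ℓ)ˣ) →* ((𝓞 k)ˣ ⧸ cubeSubgroup (𝓞 k)ˣ) :=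
  QuotientGroup.map _ _ (Units.map (RingOfIntegers.norm k : 𝓞 ℓ →* 𝓞 k))
    (cubeSubgroup_le_comap _)

/-- A number field is totally real if every embedding into `ℂ` has image in `ℝ`. -/
def IsTotallyRealField (K : Type) [Field K] [NumberField K] : Prop :=
  ∀ φ : K →+* ℂ, ∀ x : K, (φ x).im = 0

/-- A number field is totally complex if no embedding into `ℂ` has image in `ℝ`. -/
def IsTotallyComplexField (K : Type) [Field K] [NumberField K] : Prop :=
  ∀ φ : K →+* ℂ, ∃ x : K, (φ x).im ≠ 0

lemma mem_cubeSubgroup_iff {G : Type} [CommGroup G] {x : G} :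
    x ∈ cubeSubgroup G ↔ ∃ y : G, y ^ 3 = x := Iff.rfl

/-- quotient by cubes transported along a mul equiv -/
noncomputable def cubeQuotCongr {G H : Type} [CommGroup G] [CommGroup H] (e : G ≃* H) :
    (G ⧸ cubeSubgroup G) ≃* (H ⧸ cubeSubgroup H) :=
  QuotientGroup.congr _ _ e (by
    apply le_antisymm
    · rintro x ⟨y, ⟨z, rfl⟩, rfl⟩
      exact ⟨e z, by simpa [powMonoidHom] using (map_pow (e : G →* H) z 3)⟩
    · rintro x ⟨y, rfl⟩
      exact ⟨e.symm y ^ 3, ⟨e.symm y, rfl⟩, by simpa using (map_pow (e : G →* H) (e.symm y) 3)⟩)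

/-- quotient of a product by cubes -/
noncomputable def cubeQuotProd (A B : Type) [CommGroup A] [CommGroup B] :
    ((A × B) ⧸ cubeSubgroup (A × B)) ≃* (A ⧸ cubeSubgroup A) × (B ⧸ cubeSubgroup B) := by
  have hker : MonoidHom.ker ((QuotientGroup.mk' (cubeSubgroup A)).prodMap
      (QuotientGroup.mk' (cubeSubgroup B))) = cubeSubgroup (A × B) := by
    ext ⟨a, b⟩
    show (QuotientGroup.mk a, QuotientGroup.mk b) = 1 ↔ _
    rw [Prod.mk_eq_one]
    simp only [QuotientGroup.eq_one_iff]
    constructor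
    · rintro ⟨⟨x, hx⟩, ⟨y, hy⟩⟩
      exact ⟨(x, y), Prod.ext hx hy⟩
    · rintro ⟨⟨x, y⟩, h⟩
      rw [Prod.ext_iff] at h
      exact ⟨⟨x, h.1⟩, ⟨y, h.2⟩⟩
  refine (QuotientGroup.quotientMulEquivOfEq hker.symm).trans
    (QuotientGroup.quotientKerEquivOfSurjective _ ?_)
  rintro ⟨qa, qb⟩
  obtain ⟨a, rfl⟩ := QuotientGroup.mk'_surjective _ qa
  obtain ⟨b, rfl⟩ := QuotientGroup.mk'_surjective _ qb
  exact ⟨(a, b), rfl⟩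

lemma card_cubeQuot_of_finite (T : Type) [CommGroup T] [Finite T] :
    Nat.card (T ⧸ cubeSubgroup T) = Nat.card {t : T // t ^ 3 = 1} := by
  have h1 : Nat.card T = Nat.card (T ⧸ cubeSubgroup T) * Nat.card (cubeSubgroup T) :=
    Subgroup.card_eq_card_quotient_mul_card_subgroup _
  have h2 : Nat.card T = Nat.card (cubeSubgroup T) * Nat.card (MonoidHom.ker (powMonoidHom 3 : T →* T)) := by
    have := Subgroup.card_eq_card_quotient_mul_card_subgroup
      (MonoidHom.ker (powMonoidHom 3 : T →* T))
    rwa [Nat.card_congr (QuotientGroup.quotientKerEquivRange (powMonoidHom 3 : T →* T)).toEquiv,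
      show ((powMonoidHom 3 : T →* T).range) = cubeSubgroup T from rfl] at this
  have h3 : Nat.card {t : T // t ^ 3 = 1} = Nat.card (MonoidHom.ker (powMonoidHom 3 : T →* T)) := by
    apply Nat.card_congr
    exact Equiv.subtypeEquivRight (fun t => by simp [MonoidHom.mem_ker, powMonoidHom_apply])
  have hpos : 0 < Nat.card (cubeSubgroup T) := Nat.card_pos
  rw [h3]
  rw [h1, mul_comm] at h2
  exact (Nat.eq_of_mul_eq_mul_left hpos h2)

lemma card_cubeQuot_multiplicative_pi (r : ℕ) :
    Nat.card ((Multiplicative (Fin r → ℤ)) ⧸ cubeSubgroup (Multiplicative (Fin r → ℤ))) = 3 ^ r := by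
  let ψ' : (Fin r → ℤ) →+ (Fin r → ZMod 3) :=
    { toFun := fun e i => (e i : ZMod 3)
      map_zero' := by ext i; simp
      map_add' := by intro a b; funext i; show ((a i + b i : ℤ) : ZMod 3) = _; push_cast; rfl }
  let ψ : Multiplicative (Fin r → ℤ) →* Multiplicative (Fin r → ZMod 3) :=
    AddMonoidHom.toMultiplicative ψ'
  have hker : MonoidHom.ker ψ = cubeSubgroup (Multiplicative (Fin r → ℤ)) := by
    ext e
    constructor
    · intro he
      have he' : ∀ i, ((Multiplicative.toAdd e) i : ZMod 3) = 0 := by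
        intro i
        have : ψ e = 1 := he
        exact congrFun this i
      refine ⟨Multiplicative.ofAdd (fun i => Multiplicative.toAdd e i / 3), ?_⟩
      have : ∀ i, (3 : ℤ) ∣ Multiplicative.toAdd e i := by
        intro i
        exact (ZMod.intCast_zmod_eq_zero_iff_dvd _ 3).mp (he' i)
      apply Multiplicative.toAdd.injective
      ext i
      have := Int.ediv_mul_cancel (this i)
      show (3 : ℕ) • (Multiplicative.toAdd e i / 3) = Multiplicative.toAdd e i
      rw [nsmul_eq_mul]
      push_cast
      omega
    · rintro ⟨y, rfl⟩
      show ψ (y ^ 3) = 1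
      rw [map_pow]
      apply Multiplicative.toAdd.injective
      ext i
      show (3 : ℕ) • ((Multiplicative.toAdd (ψ y)) i) = 0
      have : (Multiplicative.toAdd (ψ y)) i = ((Multiplicative.toAdd y i : ℤ) : ZMod 3) := rfl
      rw [this]
      rw [nsmul_eq_mul, show ((3:ℕ) : ZMod 3) = 0 from ZMod.natCast_self 3, zero_mul]
  have hsurj : Function.Surjective ψ := by
    intro f
    refine ⟨Multiplicative.ofAdd (fun i => ((Multiplicative.toAdd f i).val : ℤ)), ?_⟩
    apply Multiplicative.toAdd.injective
    funext i
    show (((Multiplicative.toAdd f i).val : ℤ) : ZMod 3) = Multiplicative.toAdd f i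
    rw [Int.cast_natCast, ZMod.natCast_val, ZMod.cast_id]
  calc Nat.card ((Multiplicative (Fin r → ℤ)) ⧸ cubeSubgroup (Multiplicative (Fin r → ℤ)))
      = Nat.card ((Multiplicative (Fin r → ℤ)) ⧸ MonoidHom.ker ψ) := by rw [hker]
    _ = Nat.card (Multiplicative (Fin r → ZMod 3)) :=
        Nat.card_congr (QuotientGroup.quotientKerEquivOfSurjective ψ hsurj).toEquiv
    _ = 3 ^ r := by
        rw [Nat.card_eq_fintype_card]
        simp [Fintype.card_fun]

open NumberField.Units in
/-- The decomposition homomorphism from Dirichlet's unit theorem. -/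
noncomputable def unitsDecompHom (K : Type) [Field K] [NumberField K] :
    (torsion K × Multiplicative (Fin (rank K) → ℤ)) →* (𝓞 K)ˣ where
  toFun := fun p => (p.1 : (𝓞 K)ˣ) * ∏ i, (fundSystem K i) ^ (Multiplicative.toAdd p.2 i)
  map_one' := by simp
  map_mul' := by
    rintro ⟨ζ, e⟩ ⟨ζ', e'⟩
    simp only [Prod.fst_mul, Prod.snd_mul, Subgroup.coe_mul]
    rw [show Multiplicative.toAdd (e * e') = Multiplicative.toAdd e + Multiplicative.toAdd e'
      from rfl]
    simp_rw [Pi.add_apply, zpow_add]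
    rw [Finset.prod_mul_distrib]
    exact mul_mul_mul_comm _ _ _ _

open NumberField.Units in
lemma unitsDecompHom_bijective (K : Type) [Field K] [NumberField K] :
    Function.Bijective (unitsDecompHom K) := by
  constructor
  · intro a b hab
    obtain ⟨p, -, hp⟩ := exist_unique_eq_mul_prod K (unitsDecompHom K b)
    have ha := hp (a.1, Multiplicative.toAdd a.2) hab.symm
    have hb := hp (b.1, Multiplicative.toAdd b.2) rfl
    have := ha.trans hb.symm
    rw [Prod.ext_iff] at this
    exact Prod.ext this.1 (Multiplicative.toAdd.injective this.2)
  · intro x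
    obtain ⟨⟨ζ, e⟩, h, -⟩ := exist_unique_eq_mul_prod K x
    exact ⟨(ζ, Multiplicative.ofAdd e), h.symm⟩

open NumberField.Units in
noncomputable def unitsDecomp (K : Type) [Field K] [NumberField K] :
    (torsion K × Multiplicative (Fin (rank K) → ℤ)) ≃* (𝓞 K)ˣ :=
  MulEquiv.ofBijective _ (unitsDecompHom_bijective K)

open NumberField.Units in
lemma torsion_cube_equiv (K : Type) [Field K] [NumberField K] :
    Nat.card {t : torsion K // t ^ 3 = 1} = Nat.card {x : K // x ^ 3 = 1} := by
  apply Nat.card_congr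
  refine Equiv.ofBijective (fun t => ⟨(((t.1 : (𝓞 K)ˣ) : 𝓞 K) : K), ?_⟩) ⟨?_, ?_⟩
  · have h3 : ((t.1 : (𝓞 K)ˣ) : 𝓞 K) ^ 3 = 1 := by
      have := congrArg (fun z : torsion K => ((z : (𝓞 K)ˣ) : 𝓞 K)) t.2
      simpa using this
    have := congrArg (fun z : 𝓞 K => (z : K)) h3
    simpa using this
  · intro a b hab
    simp only [Subtype.mk.injEq] at hab
    exact Subtype.ext (Subtype.ext (Units.ext (RingOfIntegers.ext hab)))
  · rintro ⟨x, hx⟩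
    have hint : IsIntegral ℤ x := by
      refine ⟨Polynomial.X ^ 3 - Polynomial.C 1, Polynomial.monic_X_pow_sub_C 1 (by norm_num), ?_⟩
      simp [hx]
    set a : 𝓞 K := ⟨x, hint⟩ with ha
    have ha3 : a ^ 3 = 1 := by
      apply RingOfIntegers.ext
      push_cast
      exact hx
    let u : (𝓞 K)ˣ := ⟨a, a ^ 2, by rw [← pow_succ']; exact ha3, by rw [← pow_succ]; exact ha3⟩
    have hu3 : u ^ 3 = 1 := Units.ext (by exact ha3)
    have htors : u ∈ torsion K :=
      (CommGroup.mem_torsion u).mpr (isOfFinOrder_iff_pow_eq_one.mpr ⟨3, by norm_num, hu3⟩)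
    exact ⟨⟨⟨u, htors⟩, Subtype.ext hu3⟩, rfl⟩

open NumberField.Units in
lemma card_unitsModCubes (K : Type) [Field K] [NumberField K] :
    Nat.card ((𝓞 K)ˣ ⧸ cubeSubgroup (𝓞 K)ˣ)
      = Nat.card {x : K // x ^ 3 = 1} * 3 ^ (rank K) := by
  rw [Nat.card_congr (cubeQuotCongr (unitsDecomp K).symm).toEquiv,
      Nat.card_congr (cubeQuotProd _ _).toEquiv, Nat.card_prod,
      card_cubeQuot_of_finite, card_cubeQuot_multiplicative_pi, torsion_cube_equiv]

lemma card_cubeRoots_of_totallyReal (k : Type) [Field k] [NumberField k]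
    (hk : IsTotallyRealField k) : Nat.card {x : k // x ^ 3 = 1} = 1 := by
  have hsub : ∀ x : k, x ^ 3 = 1 → x = 1 := by
    intro x hx
    obtain ⟨φ⟩ : Nonempty (k →+* ℂ) := inferInstance
    have him : (φ x).im = 0 := hk φ x
    have hz : (φ x) = ((φ x).re : ℂ) := by
      exact Complex.ext rfl (by simp [him])
    have h3 : ((φ x).re : ℂ) ^ 3 = 1 := by
      rw [← hz, ← map_pow, hx, map_one]
    have h3' : (φ x).re ^ 3 = 1 := by
      exact_mod_cast h3
    have hre : (φ x).re = 1 := by nlinarith [sq_nonneg ((φ x).re + 1), sq_nonneg ((φ x).re - 1), sq_nonneg (φ x).re]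
    have : φ x = φ 1 := by rw [hz, hre, map_one, Complex.ofReal_one]
    exact φ.injective this
  rw [Nat.card_eq_one_iff_unique]
  exact ⟨⟨fun a b => Subtype.ext ((hsub a a.2).trans (hsub b b.2).symm)⟩, ⟨⟨1, one_pow 3⟩⟩⟩

open NumberField.InfinitePlace in
lemma rank_eq_of_CM (k ℓ : Type) [Field k] [NumberField k]
    [Field ℓ] [NumberField ℓ] [Algebra k ℓ] [FiniteDimensional k ℓ]
    (hdeg : Module.finrank k ℓ = 2)
    (hk : IsTotallyRealField k) (hℓ : IsTotallyComplexField ℓ) :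
    NumberField.Units.rank ℓ = NumberField.Units.rank k := by
  classical
  have he1 : IsEmpty {w : NumberField.InfinitePlace k // IsComplex w} := by
    refine ⟨fun ⟨w, hw⟩ => ?_⟩
    apply (isComplex_iff.mp hw)
    rw [NumberField.ComplexEmbedding.isReal_iff]
    exact RingHom.ext fun x => by
      rw [NumberField.ComplexEmbedding.conjugate_coe_eq]
      exact Complex.conj_eq_iff_im.mpr (hk _ x)
  haveI := he1
  have h1 : nrComplexPlaces k = 0 := Fintype.card_eq_zero
  have he2 : IsEmpty {w : NumberField.InfinitePlace ℓ // IsReal w} := by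
    refine ⟨fun ⟨w, hw⟩ => ?_⟩
    have hre := isReal_iff.mp hw
    rw [NumberField.ComplexEmbedding.isReal_iff] at hre
    obtain ⟨x, hx⟩ := hℓ (embedding w)
    apply hx
    have := congrArg (fun ψ : ℓ →+* ℂ => ψ x) hre
    rw [NumberField.ComplexEmbedding.conjugate_coe_eq] at this
    exact Complex.conj_eq_iff_im.mp this
  haveI := he2
  have h2 : nrRealPlaces ℓ = 0 := Fintype.card_eq_zero
  have htower : IsScalarTower ℚ k ℓ := IsScalarTower.of_algebraMap_eq' (Subsingleton.elim _ _)
  have h3 : Module.finrank ℚ k * Module.finrank k ℓ = Module.finrank ℚ ℓ :=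
    Module.finrank_mul_finrank ℚ k ℓ
  have h4 := card_add_two_mul_card_eq_rank k
  have h5 := card_add_two_mul_card_eq_rank ℓ
  have h6 := card_eq_nrRealPlaces_add_nrComplexPlaces k
  have h7 := card_eq_nrRealPlaces_add_nrComplexPlaces ℓ
  rw [hdeg] at h3
  unfold NumberField.Units.rank
  omega

lemma normUnitsModCubes_surjective (k ℓ : Type) [Field k] [NumberField k]
    [Field ℓ] [NumberField ℓ] [Algebra k ℓ] [FiniteDimensional k ℓ]
    (hdeg : Module.finrank k ℓ = 2) :
    Function.Surjective (normUnitsModCubes k ℓ) := by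
  intro q
  obtain ⟨u, rfl⟩ := QuotientGroup.mk'_surjective _ q
  refine ⟨QuotientGroup.mk ((Units.map (algebraMap (𝓞 k) (𝓞 ℓ) : 𝓞 k →* 𝓞 ℓ) u)⁻¹), ?_⟩
  have key : Units.map (RingOfIntegers.norm k : 𝓞 ℓ →* 𝓞 k)
      ((Units.map (algebraMap (𝓞 k) (𝓞 ℓ) : 𝓞 k →* 𝓞 ℓ) u)⁻¹) = (u ^ 2)⁻¹ := by
    rw [map_inv]
    congr 1
    apply Units.ext
    show RingOfIntegers.norm k (algebraMap (𝓞 k) (𝓞 ℓ) (u : 𝓞 k)) = ((u : 𝓞 k) ^ 2)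
    rw [RingOfIntegers.norm_algebraMap, hdeg]
  show QuotientGroup.mk _ = _
  rw [key]
  apply (QuotientGroup.eq (s := cubeSubgroup (𝓞 k)ˣ)).mpr
  exact ⟨u, by show u ^ 3 = _; group⟩

/-- For `k` totally real and `ℓ` a totally complex quadratic extension of `k`, the kernel
of the (surjective) homomorphism `𝒪_ℓ^×/(𝒪_ℓ^×)³ → 𝒪_k^×/(𝒪_k^×)³` induced by the
norm map has cardinality equal to the number of cube roots of unity in `ℓ`. -/
theorem card_ker_normUnitsModCubes (k ℓ : Type) [Field k] [NumberField k]
    [Field ℓ] [NumberField ℓ] [Algebra k ℓ] [FiniteDimensional k ℓ]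
    (hdeg : Module.finrank k ℓ = 2)
    (hk : IsTotallyRealField k) (hℓ : IsTotallyComplexField ℓ) :
    Nat.card (MonoidHom.ker (normUnitsModCubes k ℓ)) =
      Nat.card {x : ℓ // x ^ 3 = 1} := by
  have hsurj := normUnitsModCubes_surjective k ℓ hdeg
  have hcard : Nat.card ((𝓞 ℓ)ˣ ⧸ cubeSubgroup (𝓞 ℓ)ˣ) =
      Nat.card ((𝓞 k)ˣ ⧸ cubeSubgroup (𝓞 k)ˣ) *
        Nat.card (MonoidHom.ker (normUnitsModCubes k ℓ)) := by
    rw [Subgroup.card_eq_card_quotient_mul_card_subgroup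
      (MonoidHom.ker (normUnitsModCubes k ℓ))]
    congr 1
    exact Nat.card_congr
      (QuotientGroup.quotientKerEquivOfSurjective _ hsurj).toEquiv
  rw [card_unitsModCubes ℓ, card_unitsModCubes k, card_cubeRoots_of_totallyReal k hk,
    one_mul, rank_eq_of_CM k ℓ hdeg hk hℓ, mul_comm (Nat.card {x : ℓ // x ^ 3 = 1})] at hcard
  exact (Nat.eq_of_mul_eq_mul_left (pow_pos (by norm_num) _) hcard).symm
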